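/- Let q be a prime number, k the algebraic closure of 𝔽_q, and d ≥ 2 an integer with q ∤ d. Let a ∈ k with a ≠ 0. Then: (i) for every prime p dividing d, the element T^d + a of the rational function field k(T) is not a p-th power in k(T); and (ii) if 4 divides d, then T^d + a is not of the form −4 h^4 for any h ∈ k(T). -/
import Mathlib

theorem aux_poly {K : Type*} [Field K] (p : ℕ) (hp : p ≠ 0) (f : Polynomial K)
    (h : RatFunc K) (hh : h ^ p = algebraMap (Polynomial K) (RatFunc K) f) :
    ∃ g : Polynomial K, g ^ p = f := by
  have hint : IsIntegral (Polynomial K) h := by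
    refine ⟨Polynomial.X ^ p - Polynomial.C f, Polynomial.monic_X_pow_sub_C f hp, ?_⟩
    simp [hh]
  obtain ⟨g, hg⟩ := IsIntegrallyClosed.isIntegral_iff.mp hint
  refine ⟨g, IsFractionRing.injective (Polynomial K) (RatFunc K) ?_⟩
  rw [map_pow, hg, hh]

theorem statement8 (q : ℕ) [Fact q.Prime] (d : ℕ) (hd : 2 ≤ d) (hqd : ¬ q ∣ d)
    (a : AlgebraicClosure (ZMod q)) (ha : a ≠ 0) :
    (∀ p : ℕ, p.Prime → p ∣ d →
        ¬ ∃ h : RatFunc (AlgebraicClosure (ZMod q)),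
          h ^ p = (RatFunc.X : RatFunc (AlgebraicClosure (ZMod q))) ^ d + RatFunc.C a) ∧
      (4 ∣ d →
        ¬ ∃ h : RatFunc (AlgebraicClosure (ZMod q)),
          (RatFunc.X : RatFunc (AlgebraicClosure (ZMod q))) ^ d + RatFunc.C a
            = -4 * h ^ 4) := by
  let K := AlgebraicClosure (ZMod q)
  have hdK : (d : K) ≠ 0 := by
    rw [Ne, CharP.cast_eq_zero_iff K q d]
    exact hqd
  have hsf : Squarefree (Polynomial.X ^ d + Polynomial.C a : Polynomial K) := by
    have := (Polynomial.separable_X_pow_sub_C (-a) hdK (by simpa using ha)).squarefree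
    simpa [sub_neg_eq_add] using this
  have key : ∀ p : ℕ, p.Prime → p ∣ d →
      ¬ ∃ h : RatFunc K, h ^ p = (RatFunc.X : RatFunc K) ^ d + RatFunc.C a := by
    rintro p hp hpd ⟨h, hh⟩
    have hh' : h ^ p = algebraMap (Polynomial K) (RatFunc K)
        (Polynomial.X ^ d + Polynomial.C a) := by
      rw [hh, map_add, map_pow, RatFunc.algebraMap_X, RatFunc.algebraMap_C]
    obtain ⟨g, hg⟩ := aux_poly p hp.ne_zero _ h hh'
    have h2 : g * g ∣ Polynomial.X ^ d + Polynomial.C a := by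
      rw [← hg, ← pow_two]
      exact pow_dvd_pow g hp.two_le
    have hu : IsUnit (g ^ p) := IsUnit.pow p (hsf g h2)
    rw [hg] at hu
    have := Polynomial.natDegree_eq_zero_of_isUnit hu
    rw [Polynomial.natDegree_X_pow_add_C] at this
    omega
  refine ⟨key, fun h4 ⟨h, hh⟩ => ?_⟩
  have h4K : (-4 : K) ≠ 0 := by
    simp only [ne_eq, neg_eq_zero]
    intro h40
    have : ((4 : ℕ) : K) = 0 := by push_cast; exact h40
    rw [CharP.cast_eq_zero_iff K q 4] at this
    have hq2 : q = 2 := by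
      have := (Fact.out : q.Prime).dvd_of_dvd_pow (n := 2) (by norm_num [this] : q ∣ 2 ^ 2)
      exact ((Nat.prime_dvd_prime_iff_eq Fact.out Nat.prime_two).mp this)
    exact hqd (hq2 ▸ dvd_trans ⟨2, rfl⟩ h4)
  obtain ⟨c, hc⟩ := IsAlgClosed.exists_pow_nat_eq (-4 : K) (n := 4) (by norm_num)
  refine key 2 Nat.prime_two (dvd_trans ⟨2, rfl⟩ h4) ⟨(RatFunc.C c * h) ^ 2, ?_⟩
  rw [← pow_mul, hh]
  rw [mul_pow, ← map_pow, hc, map_neg, map_ofNat]
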